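/- If C : 2^M → ℝ≥0 is submodular then its potential function P_C is submodular: for all allocations S, T, P_C(S) + P_C(T) ≥ P_C(S ∪ T) + P_C(S ∩ T), where union and intersection are taken componentwise. -/

import Mathlib

open Finset

variable {α : Type*}

noncomputable def potential [DecidableEq α] (n : ℕ)
    (C : Finset α → ℝ) (S : Fin n → Finset α) : ℝ :=
  ∑ I ∈ (univ : Finset (Fin n)).powerset.filter (· ≠ ∅),
    C (I.biUnion S) / ((I.card : ℝ) * (n.choose I.card : ℝ))

theorem stmt2 [DecidableEq α] (n : ℕ) (M : Fin n → Finset α)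
    (hM : ∀ i j : Fin n, i ≠ j → Disjoint (M i) (M j))
    (C : Finset α → ℝ) (hCnn : ∀ S, 0 ≤ C S)
    (hCsub : ∀ S T : Finset α, C (S ∪ T) + C (S ∩ T) ≤ C S + C T)
    (S T : Fin n → Finset α) (hS : ∀ i, S i ⊆ M i) (hT : ∀ i, T i ⊆ M i) :
    potential n C (fun i => S i ∪ T i) + potential n C (fun i => S i ∩ T i) ≤
      potential n C S + potential n C T := by
  unfold potential
  rw [← Finset.sum_add_distrib, ← Finset.sum_add_distrib]
  apply Finset.sum_le_sum
  intro I hI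
  simp only [Finset.mem_filter, Finset.mem_powerset] at hI
  have hcard : 1 ≤ I.card := Finset.one_le_card.2 (Finset.nonempty_iff_ne_empty.2 hI.2)
  have hle : I.card ≤ n := by
    simpa using Finset.card_le_card hI.1
  have hd : (0 : ℝ) < (I.card : ℝ) * (n.choose I.card : ℝ) := by
    apply mul_pos
    · exact_mod_cast hcard
    · exact_mod_cast Nat.choose_pos hle
  rw [← add_div, ← add_div]
  apply div_le_div_of_nonneg_right _ hd.le
  have hU : I.biUnion (fun i => S i ∪ T i) = I.biUnion S ∪ I.biUnion T := by
    ext x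
    simp only [Finset.mem_biUnion, Finset.mem_union]
    constructor
    · rintro ⟨i, hi, hx | hx⟩
      · exact Or.inl ⟨i, hi, hx⟩
      · exact Or.inr ⟨i, hi, hx⟩
    · rintro (⟨i, hi, hx⟩ | ⟨i, hi, hx⟩)
      · exact ⟨i, hi, Or.inl hx⟩
      · exact ⟨i, hi, Or.inr hx⟩
  have hV : I.biUnion (fun i => S i ∩ T i) = I.biUnion S ∩ I.biUnion T := by
    ext x
    simp only [Finset.mem_biUnion, Finset.mem_inter]
    constructor
    · rintro ⟨i, hi, hxS, hxT⟩
      exact ⟨⟨i, hi, hxS⟩, ⟨i, hi, hxT⟩⟩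
    · rintro ⟨⟨i, hi, hxS⟩, ⟨j, hj, hxT⟩⟩
      have hij : i = j := by
        by_contra h
        exact Finset.disjoint_left.1 (hM i j h) (hS i hxS) (hT j hxT)
      subst hij
      exact ⟨i, hi, hxS, hxT⟩
  rw [hU, hV]
  exact hCsub _ _
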